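/- The evaluators E₁ and E₃ for Combinatory Logic are inconvertible: E₁ ≠β E₃, where ⟨M⟩ denotes λz.zM for a variable z not free in M, ω = λx.xx, E₁ = ω(λw.⟨λabc.ab((wwb)(wwc))⟩), and E₃ = ⟨ω(λwabc.ab(Sbc(ww)))⟩. -/

import Mathlib

/-- Untyped λ-terms in de Bruijn notation (the variables are `ℕ`). -/
inductive Lam : Type
  | var : ℕ → Lam
  | app : Lam → Lam → Lam
  | abs : Lam → Lam
  deriving DecidableEq

namespace Lam

/-- Shift the free de Bruijn indices `≥ d` up by one. -/
def lift (d : ℕ) : Lam → Lam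
  | var n => if n < d then var n else var (n + 1)
  | app s t => app (lift d s) (lift d t)
  | abs t => abs (lift (d + 1) t)

/-- Capture-avoiding substitution `t[k := u]`. -/
def subst : Lam → ℕ → Lam → Lam
  | var n, k, u => if n < k then var n else if n = k then u else var (n - 1)
  | app s t, k, u => app (subst s k u) (subst t k u)
  | abs t, k, u => abs (subst t (k + 1) (lift 0 u))

/-- One-step β-reduction `→β`: the compatible closure of the β-rule. -/
inductive Beta : Lam → Lam → Prop
  | beta (t u : Lam) : Beta (Lam.app (Lam.abs t) u) (subst t 0 u)
  | appL {s s' : Lam} (t : Lam) : Beta s s' → Beta (Lam.app s t) (Lam.app s' t)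
  | appR (s : Lam) {t t' : Lam} : Beta t t' → Beta (Lam.app s t) (Lam.app s t')
  | abs {t t' : Lam} : Beta t t' → Beta (Lam.abs t) (Lam.abs t')

/-- `↠β`: the reflexive–transitive closure of `→β`. -/
def BetaStar : Lam → Lam → Prop := Relation.ReflTransGen Beta

/-- `→β^k`: the `k`-fold composition of `→β`. -/
def BetaN : ℕ → Lam → Lam → Prop
  | 0, s, t => s = t
  | k + 1, s, t => ∃ u, Beta s u ∧ BetaN k u t

/-- `=β`, β-convertibility: the equivalence closure of `→β`. -/
inductive Conv : Lam → Lam → Prop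
  | rel {s t : Lam} : Beta s t → Conv s t
  | refl (s : Lam) : Conv s s
  | symm {s t : Lam} : Conv s t → Conv t s
  | trans {s t u : Lam} : Conv s t → Conv t u → Conv s u

/-- The free variables of a term (as de Bruijn indices). -/
def FV : Lam → Finset ℕ
  | var n => {n}
  | app s t => FV s ∪ FV t
  | abs t => ((FV t).erase 0).image (· - 1)

/-- `Y` is a fixed point combinator (fpc): `Y x =β x (Y x)` for a variable `x` not free in `Y`. -/
def IsFPC (Y : Lam) : Prop :=
  ∀ x : ℕ, x ∉ FV Y → Conv (app Y (var x)) (app (var x) (app Y (var x)))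

/-- `I = λx.x` -/
def combI : Lam := abs (var 0)

/-- `S = λxyz.xz(yz)` -/
def combS : Lam := abs (abs (abs (app (app (var 2) (var 0)) (app (var 1) (var 0)))))

/-- `B = λxyz.x(yz)` -/
def combB : Lam := abs (abs (abs (app (var 2) (app (var 1) (var 0)))))

/-- `δ = λab.b(ab)` -/
def delta : Lam := abs (abs (app (var 0) (app (var 1) (var 0))))

/-- `η = λxf.f(xxf)` -/
def etaC : Lam := abs (abs (app (var 0) (app (app (var 1) (var 1)) (var 0))))

/-- Curry's fpc `Y₀ = λf.(λx.f(xx))(λx.f(xx))` -/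
def curryY : Lam :=
  abs (app (abs (app (var 1) (app (var 0) (var 0))))
    (abs (app (var 1) (app (var 0) (var 0)))))

/-- `A B ⋯ B`: `A` applied to `n` copies of `B`, associating to the left. -/
def appN (A B : Lam) : ℕ → Lam
  | 0 => A
  | n + 1 => app (appN A B n) B

/-- `M N₁ ⋯ Nₘ`: `M` applied to the terms in `L`, associating to the left. -/
def appList (M : Lam) (L : List Lam) : Lam := L.foldl app M

/-- `ω = λx.xx` -/
def omega : Lam := abs (app (var 0) (var 0))

/-- `E₁ = ω(λw.⟨λabc.ab((wwb)(wwc))⟩)`, with `⟨M⟩ = λz.zM`. -/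
def E1 : Lam :=
  app omega (abs (abs (app (var 0) (abs (abs (abs
    (app (app (var 2) (var 1))
      (app (app (app (var 4) (var 4)) (var 1))
        (app (app (var 4) (var 4)) (var 0))))))))))

/-- `E₃ = ⟨ω(λwabc.ab(Sbc(ww)))⟩`, with `⟨M⟩ = λz.zM`. -/
def E3 : Lam :=
  abs (app (var 0) (app omega (abs (abs (abs (abs
    (app (app (var 2) (var 1))
      (app (app (app combS (var 1)) (var 0))
        (app (var 3) (var 3))))))))))
/-! ### Substitution lemmas -/

theorem lift_lift (t : Lam) : ∀ i j, i ≤ j →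
    lift i (lift j t) = lift (j + 1) (lift i t) := by
  induction t with
  | var n =>
    intro i j hij
    simp only [lift]; split_ifs <;> simp only [lift] <;>
      split_ifs <;> first | rfl | omega | (congr 1; omega)
  | app s t ihs iht =>
    intro i j hij
    simp only [lift, ihs _ _ hij, iht _ _ hij]
  | abs t ih =>
    intro i j hij
    simp only [lift, ih (i+1) (j+1) (by omega)]

theorem lift_subst (t : Lam) : ∀ i k u, i ≤ k →
    lift i (subst t k u) = subst (lift i t) (k + 1) (lift i u) := by
  induction t with
  | var n =>
    intro i k u h
    simp only [lift, subst]; split_ifs <;>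
      simp only [lift, subst] <;> split_ifs <;> first | rfl | omega | (congr 1; omega)
  | app s t ihs iht =>
    intro i k u h
    simp only [lift, subst, ihs _ _ _ h, iht _ _ _ h]
  | abs t ih =>
    intro i k u h
    simp only [lift, subst, ih (i+1) (k+1) (lift 0 u) (by omega), lift_lift u 0 i (by omega)]

theorem lift_subst' (t : Lam) : ∀ i k u, k ≤ i →
    lift i (subst t k u) = subst (lift (i + 1) t) k (lift i u) := by
  induction t with
  | var n =>
    intro i k u h
    simp only [lift, subst]; split_ifs <;>
      simp only [lift, subst] <;> split_ifs <;> first | rfl | omega | (congr 1; omega)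
  | app s t ihs iht =>
    intro i k u h
    simp only [lift, subst, ihs _ _ _ h, iht _ _ _ h]
  | abs t ih =>
    intro i k u h
    simp only [lift, subst, ih (i+1) (k+1) (lift 0 u) (by omega), lift_lift u 0 i (by omega)]

theorem subst_lift (t : Lam) : ∀ k u, subst (lift k t) k u = t := by
  induction t with
  | var n =>
    intro k u
    simp only [lift]; split_ifs <;> simp only [subst] <;>
      split_ifs <;> first | rfl | omega | (congr 1; omega)
  | app s t ihs iht =>
    intro k u
    simp only [lift, subst, ihs, iht]
  | abs t ih =>
    intro k u
    simp only [lift, subst, ih]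

theorem subst_subst (t : Lam) : ∀ i j u v, i ≤ j →
    subst (subst t i u) j v = subst (subst t (j + 1) (lift i v)) i (subst u j v) := by
  induction t with
  | var n =>
    intro i j u v h
    rcases Nat.lt_trichotomy n i with h1 | h1 | h1
    · simp only [subst]
      rw [if_pos h1, if_pos (by omega : n < j + 1)]
      simp only [subst]
      rw [if_pos (by omega : n < j), if_pos h1]
    · subst h1
      simp only [subst]
      split_ifs <;> (try simp only [subst]) <;> (try split_ifs) <;>
        first | rfl | omega | (congr 1; omega)
    · rcases Nat.lt_trichotomy n (j + 1) with h2 | h2 | h2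
      · simp only [subst]
        rw [if_neg (by omega), if_neg (by omega : ¬ n = i), if_pos h2]
        simp only [subst]
        rw [if_pos (by omega : n - 1 < j), if_neg (by omega), if_neg (by omega : ¬ n = i)]
      · subst h2
        simp only [subst]
        split_ifs <;> (try simp only [subst, subst_lift]) <;> (try split_ifs) <;>
          first | rfl | omega | (congr 1; omega)
      · simp only [subst]
        rw [if_neg (by omega), if_neg (by omega : ¬ n = i), if_neg (by omega),
          if_neg (by omega : ¬ n = j + 1)]
        simp only [subst]
        rw [if_neg (by omega), if_neg (by omega : ¬ n - 1 = j), if_neg (by omega),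
          if_neg (by omega : ¬ n - 1 = i)]
  | app s t ihs iht =>
    intro i j u v h
    simp only [subst, ihs _ _ _ _ h, iht _ _ _ _ h]
  | abs t ih =>
    intro i j u v h
    simp only [subst, ih (i+1) (j+1) _ _ (by omega), lift_lift v 0 i (by omega),
      lift_subst u 0 j v (by omega)]

/-! ### Parallel reduction -/

inductive Par : Lam → Lam → Prop
  | var (n : ℕ) : Par (var n) (var n)
  | app {s s' t t' : Lam} : Par s s' → Par t t' → Par (app s t) (app s' t')
  | abs {t t' : Lam} : Par t t' → Par (abs t) (abs t')
  | beta {s s' t t' : Lam} : Par s s' → Par t t' → Par (app (abs s) t) (subst s' 0 t')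

theorem Par.refl : ∀ t, Par t t := by
  intro t
  induction t with
  | var n => exact Par.var n
  | app s t ihs iht => exact Par.app ihs iht
  | abs t ih => exact Par.abs ih

theorem Par.of_beta {s t : Lam} (h : Beta s t) : Par s t := by
  induction h with
  | beta t u => exact Par.beta (Par.refl t) (Par.refl u)
  | appL t _ ih => exact Par.app ih (Par.refl t)
  | appR s _ ih => exact Par.app (Par.refl s) ih
  | abs _ ih => exact Par.abs ih

theorem BetaStar.appL {s s' : Lam} (t : Lam) (hs : BetaStar s s') :
    BetaStar (app s t) (app s' t) := by
  exact Relation.ReflTransGen.lift (f := fun x => Lam.app x t) (fun _ _ h => Beta.appL t h) _ _ hs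

theorem BetaStar.appR (s : Lam) {t t' : Lam} (ht : BetaStar t t') :
    BetaStar (app s t) (app s t') := by
  exact Relation.ReflTransGen.lift (f := fun x => Lam.app s x) (fun _ _ h => Beta.appR s h) _ _ ht

theorem BetaStar.app {s s' t t' : Lam} (hs : BetaStar s s') (ht : BetaStar t t') :
    BetaStar (app s t) (app s' t') :=
  Relation.ReflTransGen.trans (BetaStar.appL t hs) (BetaStar.appR s' ht)

theorem BetaStar.abs {t t' : Lam} (ht : BetaStar t t') : BetaStar (abs t) (abs t') := by
  exact Relation.ReflTransGen.lift (f := fun x => Lam.abs x) (fun _ _ h => Beta.abs h) _ _ ht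

theorem Par.to_betaStar {s t : Lam} (h : Par s t) : BetaStar s t := by
  induction h with
  | var n => exact Relation.ReflTransGen.refl
  | app _ _ ihs iht => exact BetaStar.app ihs iht
  | abs _ ih => exact BetaStar.abs ih
  | @beta s s' t t' _ _ ihs iht =>
    exact Relation.ReflTransGen.tail (BetaStar.app (BetaStar.abs ihs) iht) (Beta.beta s' t')

theorem Par.lift {s t : Lam} (h : Par s t) : ∀ d, Par (lift d s) (lift d t) := by
  induction h with
  | var n =>
    intro d
    simp only [Lam.lift]; split_ifs <;> exact Par.refl _
  | app _ _ ihs iht =>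
    intro d
    exact Par.app (ihs d) (iht d)
  | abs _ ih =>
    intro d
    exact Par.abs (ih (d+1))
  | @beta s s' t t' _ _ ihs iht =>
    intro d
    have h1 : Lam.lift d (subst s' 0 t') = subst (Lam.lift (d+1) s') 0 (Lam.lift d t') :=
      lift_subst' s' d 0 t' (by omega)
    simp only [Lam.lift]
    rw [h1]
    exact Par.beta (ihs (d+1)) (iht d)

theorem Par.subst' {s s' : Lam} (h : Par s s') : ∀ k {u u' : Lam}, Par u u' →
    Par (subst s k u) (subst s' k u') := by
  induction h with
  | var n =>
    intro k u u' hu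
    simp only [Lam.subst]; split_ifs <;> first | exact Par.refl _ | exact hu
  | app _ _ ihs iht =>
    intro k u u' hu
    exact Par.app (ihs k hu) (iht k hu)
  | abs _ ih =>
    intro k u u' hu
    exact Par.abs (ih (k+1) (hu.lift 0))
  | @beta a a' b b' _ _ iha ihb =>
    intro k u u' hu
    have h1 : Lam.subst (Lam.subst a' 0 b') k u'
        = Lam.subst (Lam.subst a' (k+1) (Lam.lift 0 u')) 0 (Lam.subst b' k u') :=
      subst_subst a' 0 k b' u' (by omega)
    simp only [Lam.subst]
    rw [h1]
    exact Par.beta (iha (k+1) (hu.lift 0)) (ihb k hu)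

/-- Complete development. -/
def dev : Lam → Lam
  | var n => var n
  | abs t => abs (dev t)
  | app (abs s) t => subst (dev s) 0 (dev t)
  | app (var n) t => app (var n) (dev t)
  | app (app a b) t => app (dev (app a b)) (dev t)

theorem Par.triangle {a b : Lam} (h : Par a b) : Par b (dev a) := by
  induction h with
  | var n => exact Par.var n
  | abs _ ih => exact Par.abs ih
  | @app s s' t t' hs ht ihs iht =>
    cases s with
    | var n =>
      cases hs
      exact Par.app ihs iht
    | app a b => exact Par.app ihs iht
    | abs s0 =>
      cases hs with
      | abs hs0 =>
        simp only [dev] at ihs ⊢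
        cases ihs with
        | abs h' => exact Par.beta h' iht
  | @beta s s' t t' hs ht ihs iht =>
    simp only [dev]
    exact Par.subst' ihs 0 iht

theorem par_diamond : ∀ a b c, Par a b → Par a c →
    ∃ d, Relation.ReflGen Par b d ∧ Relation.ReflTransGen Par c d :=
  fun a _ _ hb hc => ⟨dev a, Relation.ReflGen.single hb.triangle,
    Relation.ReflTransGen.single hc.triangle⟩

theorem conv_join {s t : Lam} (h : Conv s t) :
    ∃ u, BetaStar s u ∧ BetaStar t u := by
  have equiv := Relation.equivalence_join_reflTransGen par_diamond
  have key : Relation.Join (Relation.ReflTransGen Par) s t := by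
    induction h with
    | @rel a b hab =>
      exact ⟨b, Relation.ReflTransGen.single (Par.of_beta hab), Relation.ReflTransGen.refl⟩
    | refl a => exact equiv.refl a
    | symm _ ih => exact equiv.symm ih
    | trans _ _ ih1 ih2 => exact equiv.trans ih1 ih2
  rcases key with ⟨u, hsu, htu⟩
  have conv : ∀ {a b : Lam}, Relation.ReflTransGen Par a b → BetaStar a b := by
    intro a b hab
    induction hab with
    | refl => exact Relation.ReflTransGen.refl
    | tail _ h2 ih => exact Relation.ReflTransGen.trans ih (Par.to_betaStar h2)
  exact ⟨u, conv hsu, conv htu⟩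
/-! ### One-step reducts, computably -/

def headRed : Lam → Lam → List Lam
  | abs b, u => [subst b 0 u]
  | _, _ => []

def reducts : Lam → List Lam
  | var _ => []
  | abs t => (reducts t).map abs
  | app s t => headRed s t ++ (reducts s).map (fun x => app x t) ++ (reducts t).map (fun x => app s x)

theorem beta_mem {s t : Lam} (h : Beta s t) : t ∈ reducts s := by
  induction h with
  | beta b u =>
    simp [reducts, headRed]
  | appL t _ ih =>
    simp only [reducts, List.mem_append, List.mem_map]
    exact Or.inl (Or.inr ⟨_, ih, rfl⟩)
  | appR s _ ih =>
    simp only [reducts, List.mem_append, List.mem_map]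
    exact Or.inr ⟨_, ih, rfl⟩
  | abs _ ih =>
    simp only [reducts, List.mem_map]
    exact ⟨_, ih, rfl⟩

/-! ### Concrete combinators -/

/-- body of `P` -/
def Pbody : Lam :=
  abs (app (var 0) (abs (abs (abs
    (app (app (var 2) (var 1))
      (app (app (app (var 4) (var 4)) (var 1))
        (app (app (var 4) (var 4)) (var 0))))))))

/-- `P = λw.⟨λabc.ab((wwb)(wwc))⟩` -/
def P : Lam := abs Pbody

/-- the first interesting reduct of `P P` -/
def K1 : Lam :=
  abs (abs (abs (app (app (var 2) (var 1))
    (app (app (app P P) (var 1)) (app (app P P) (var 0))))))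

theorem E1_eq : E1 = app omega P := rfl

def QQ0 : Lam :=
  abs (abs (abs (abs
    (app (app (var 2) (var 1))
      (app (app (app combS (var 1)) (var 0))
        (app (var 3) (var 3)))))))

theorem E3_eq : E3 = abs (app (var 0) (app omega QQ0)) := rfl

def T1 : Lam := abs (abs (app (app (var 3) (var 0)) (app (var 1) (var 0))))
def T2 : Lam := abs (app (app (var 2) (var 0)) (app (var 1) (var 0)))

def QQ1 : Lam :=
  abs (abs (abs (abs
    (app (app (var 2) (var 1))
      (app (app T1 (var 0)) (app (var 3) (var 3)))))))

def QQ2 : Lam :=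
  abs (abs (abs (abs
    (app (app (var 2) (var 1))
      (app T2 (app (var 3) (var 3)))))))

def QQ3 : Lam :=
  abs (abs (abs (abs
    (app (app (var 2) (var 1))
      (app (app (var 1) (app (var 3) (var 3)))
        (app (var 0) (app (var 3) (var 3))))))))

example : reducts QQ0 = [QQ1] := by decide
example : reducts QQ1 = [QQ2] := by decide
example : reducts QQ2 = [QQ3] := by decide
example : reducts QQ3 = [] := by decide
example : reducts P = [] := by decide
example : reducts omega = [] := by decide
example : reducts combS = [] := by decide
example : reducts T1 = [] := by decide
example : reducts T2 = [] := by decide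
/-! ### Free-variable lemmas -/

theorem subst_fv : ∀ (t : Lam) (j : ℕ) (u : Lam), (∀ m ∈ FV t, m < j) → subst t j u = t := by
  intro t
  induction t with
  | var n =>
    intro j u h
    have : n < j := h n (by simp [FV])
    simp only [subst]
    rw [if_pos this]
  | app s t ihs iht =>
    intro j u h
    simp only [FV, Finset.mem_union] at h
    simp only [subst, ihs j u (fun m hm => h m (Or.inl hm)), iht j u (fun m hm => h m (Or.inr hm))]
  | abs t ih =>
    intro j u h
    simp only [subst]
    rw [ih (j+1) (lift 0 u)]
    intro m hm
    rcases Nat.eq_zero_or_pos m with rfl | hpos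
    · omega
    · have : m - 1 ∈ FV (abs t) := by
        simp only [FV, Finset.mem_image]
        exact ⟨m, Finset.mem_erase.2 ⟨by omega, hm⟩, rfl⟩
      have := h _ this
      omega

theorem lift_fv : ∀ (t : Lam) (d : ℕ), (∀ m ∈ FV t, m < d) → lift d t = t := by
  intro t
  induction t with
  | var n =>
    intro d h
    have : n < d := h n (by simp [FV])
    simp only [lift]
    rw [if_pos this]
  | app s t ihs iht =>
    intro d h
    simp only [FV, Finset.mem_union] at h
    simp only [lift, ihs d (fun m hm => h m (Or.inl hm)), iht d (fun m hm => h m (Or.inr hm))]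
  | abs t ih =>
    intro d h
    simp only [lift]
    rw [ih (d+1)]
    intro m hm
    rcases Nat.eq_zero_or_pos m with rfl | hpos
    · omega
    · have : m - 1 ∈ FV (abs t) := by
        simp only [FV, Finset.mem_image]
        exact ⟨m, Finset.mem_erase.2 ⟨by omega, hm⟩, rfl⟩
      have := h _ this
      omega

theorem fv_abs_lt {t : Lam} {c : ℕ} (h : ∀ m ∈ FV t, m < c + 1) :
    ∀ m ∈ FV (abs t), m < c := by
  intro m hm
  simp only [FV, Finset.mem_image, Finset.mem_erase] at hm
  rcases hm with ⟨m', ⟨hne, hm'⟩, rfl⟩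
  have := h m' hm'
  omega

theorem no_step {s : Lam} (hs : reducts s = []) {t : Lam} : ¬ Beta s t := by
  intro h
  have := beta_mem h
  rw [hs] at this
  exact absurd this (List.not_mem_nil)

theorem P_nf {t : Lam} : ¬ Beta P t := no_step (by decide)
theorem omega_nf {t : Lam} : ¬ Beta omega t := no_step (by decide)
theorem combS_nf {t : Lam} : ¬ Beta combS t := no_step (by decide)
theorem T1_nf {t : Lam} : ¬ Beta T1 t := no_step (by decide)
theorem var_nf {n : ℕ} {t : Lam} : ¬ Beta (var n) t := no_step (s := var n) rfl

/-! ### The grammar of reducts of `E1` -/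

inductive Tag1 | g1 | h | x1 | x0

inductive C1 : Tag1 → Lam → Prop
  | pp : C1 .g1 (app P P)
  | wrap {k} : C1 .h k → C1 .g1 (abs (app (var 0) k))
  | node {x y} : C1 .x1 x → C1 .x0 y →
      C1 .h (abs (abs (abs (app (app (var 2) (var 1)) (app x y)))))
  | x1a {g} : C1 .g1 g → C1 .x1 (app g (var 1))
  | x1b {k} : C1 .h k → C1 .x1 (app (var 1) k)
  | x0a {g} : C1 .g1 g → C1 .x0 (app g (var 0))
  | x0b {k} : C1 .h k → C1 .x0 (app (var 0) k)

def bound1 : Tag1 → ℕ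
  | .g1 => 0
  | .h => 0
  | .x1 => 2
  | .x0 => 2

theorem C1_fv {i : Tag1} {s : Lam} (h : C1 i s) : ∀ m ∈ FV s, m < bound1 i := by
  induction h with
  | pp =>
    intro m hm
    rw [show FV (app P P) = ∅ from by decide] at hm
    exact absurd hm (Finset.notMem_empty m)
  | wrap _ ih =>
    refine fv_abs_lt ?_
    intro m hm
    simp only [FV, Finset.mem_union, Finset.mem_singleton] at hm
    rcases hm with rfl | hm
    · omega
    · have := ih m hm; simp only [bound1] at this ⊢; omega
  | node _ _ ihx ihy =>
    refine fv_abs_lt (fv_abs_lt (fv_abs_lt ?_))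
    intro m hm
    simp only [FV, Finset.mem_union, Finset.mem_singleton] at hm
    rcases hm with ((rfl | rfl) | (hm | hm))
    · omega
    · omega
    · have := ihx m hm; simp only [bound1] at this ⊢; omega
    · have := ihy m hm; simp only [bound1] at this ⊢; omega
  | x1a _ ih =>
    intro m hm
    simp only [FV, Finset.mem_union, Finset.mem_singleton] at hm
    rcases hm with hm | rfl
    · have := ih m hm; simp only [bound1] at this ⊢; omega
    · simp only [bound1]; omega
  | x1b _ ih =>
    intro m hm
    simp only [FV, Finset.mem_union, Finset.mem_singleton] at hm
    rcases hm with rfl | hm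
    · simp only [bound1]; omega
    · have := ih m hm; simp only [bound1] at this ⊢; omega
  | x0a _ ih =>
    intro m hm
    simp only [FV, Finset.mem_union, Finset.mem_singleton] at hm
    rcases hm with hm | rfl
    · have := ih m hm; simp only [bound1] at this ⊢; omega
    · simp only [bound1]; omega
  | x0b _ ih =>
    intro m hm
    simp only [FV, Finset.mem_union, Finset.mem_singleton] at hm
    rcases hm with rfl | hm
    · simp only [bound1]; omega
    · have := ih m hm; simp only [bound1] at this ⊢; omega

theorem C1h_subst {k : Lam} (h : C1 .h k) (j : ℕ) (u : Lam) : subst k j u = k :=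
  subst_fv k j u (fun m hm => absurd (C1_fv h m hm) (by simp [bound1]))

theorem C1_closed {i : Tag1} {s : Lam} (h : C1 i s) : ∀ {t : Lam}, Beta s t → C1 i t := by
  induction h with
  | pp =>
    intro t hb
    cases hb with
    | beta b u =>
      show C1 .g1 (subst Pbody 0 P)
      have e : subst Pbody 0 P = abs (app (var 0) K1) := by decide
      rw [e]
      exact C1.wrap (C1.node (C1.x1a C1.pp) (C1.x0a C1.pp))
    | appL _ hb' => exact absurd hb' P_nf
    | appR _ hb' => exact absurd hb' P_nf
  | wrap _ ih =>
    intro t hb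
    cases hb with
    | abs hb' =>
      cases hb' with
      | appL _ hb'' => exact absurd hb'' var_nf
      | appR _ hb'' => exact C1.wrap (ih hb'')
  | node hx hy ihx ihy =>
    intro t hb
    cases hb with
    | abs hb1 =>
      cases hb1 with
      | abs hb2 =>
        cases hb2 with
        | abs hb3 =>
          cases hb3 with
          | appL _ hb4 =>
            cases hb4 with
            | appL _ hb5 => exact absurd hb5 var_nf
            | appR _ hb5 => exact absurd hb5 var_nf
          | appR _ hb4 =>
            cases hb4 with
            | beta b u => cases hx
            | appL _ hb5 => exact C1.node (ihx hb5) hy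
            | appR _ hb5 => exact C1.node hx (ihy hb5)
  | x1a hg ih =>
    intro t hb
    cases hb with
    | beta b u =>
      cases hg with
      | @wrap k hk =>
        show C1 .x1 (subst (app (var 0) k) 0 (var 1))
        simp only [subst, if_true]
        rw [C1h_subst hk]
        exact C1.x1b hk
    | appL _ hb' => exact C1.x1a (ih hb')
    | appR _ hb' => exact absurd hb' var_nf
  | x1b hk ih =>
    intro t hb
    cases hb with
    | appL _ hb' => exact absurd hb' var_nf
    | appR _ hb' => exact C1.x1b (ih hb')
  | x0a hg ih =>
    intro t hb
    cases hb with
    | beta b u =>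
      cases hg with
      | @wrap k hk =>
        show C1 .x0 (subst (app (var 0) k) 0 (var 0))
        simp only [subst, if_true]
        rw [C1h_subst hk]
        exact C1.x0b hk
    | appL _ hb' => exact C1.x0a (ih hb')
    | appR _ hb' => exact absurd hb' var_nf
  | x0b hk ih =>
    intro t hb
    cases hb with
    | appL _ hb' => exact absurd hb' var_nf
    | appR _ hb' => exact C1.x0b (ih hb')
/-! ### The grammar of reducts of `E3` -/

inductive Tag3 | q | g3 | u | w

inductive C3 : Tag3 → Lam → Prop
  | q0 : C3 .q QQ0
  | q1 : C3 .q QQ1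
  | q2 : C3 .q QQ2
  | q3 : C3 .q QQ3
  | pair {a b} : C3 .q a → C3 .q b → C3 .g3 (app a b)
  | node {u} : C3 .u u → C3 .g3 (abs (abs (abs (app (app (var 2) (var 1)) u))))
  | u0 {g} : C3 .g3 g → C3 .u (app (app (app combS (var 1)) (var 0)) g)
  | u1 {g} : C3 .g3 g → C3 .u (app (app T1 (var 0)) g)
  | u2 {g} : C3 .g3 g → C3 .u (app T2 g)
  | u3 {g g'} : C3 .g3 g → C3 .g3 g' → C3 .u (app (app (var 1) g) (app (var 0) g'))
  | w1 {q} : C3 .q q → C3 .w (app omega q)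
  | w2 {g} : C3 .g3 g → C3 .w g

def bound3 : Tag3 → ℕ
  | .q => 0
  | .g3 => 0
  | .u => 2
  | .w => 0

theorem C3_fv {i : Tag3} {s : Lam} (h : C3 i s) : ∀ m ∈ FV s, m < bound3 i := by
  induction h with
  | q0 =>
    intro m hm; rw [show FV QQ0 = ∅ from by decide] at hm
    exact absurd hm (Finset.notMem_empty m)
  | q1 =>
    intro m hm; rw [show FV QQ1 = ∅ from by decide] at hm
    exact absurd hm (Finset.notMem_empty m)
  | q2 =>
    intro m hm; rw [show FV QQ2 = ∅ from by decide] at hm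
    exact absurd hm (Finset.notMem_empty m)
  | q3 =>
    intro m hm; rw [show FV QQ3 = ∅ from by decide] at hm
    exact absurd hm (Finset.notMem_empty m)
  | pair _ _ iha ihb =>
    intro m hm
    simp only [FV, Finset.mem_union] at hm
    rcases hm with hm | hm
    · have := iha m hm; simp only [bound3] at this ⊢; omega
    · have := ihb m hm; simp only [bound3] at this ⊢; omega
  | node _ ihu =>
    refine fv_abs_lt (fv_abs_lt (fv_abs_lt ?_))
    intro m hm
    simp only [FV, Finset.mem_union, Finset.mem_singleton] at hm
    rcases hm with (rfl | rfl) | hm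
    · omega
    · omega
    · have := ihu m hm; simp only [bound3] at this ⊢; omega
  | u0 _ ih =>
    intro m hm
    simp only [bound3]
    rcases Finset.mem_union.1 hm with h | h
    · have := (by decide : ∀ m ∈ FV (app (app combS (var 1)) (var 0)), m < 2) m h
      omega
    · have := ih m h; simp only [bound3] at this; omega
  | u1 _ ih =>
    intro m hm
    simp only [bound3]
    rcases Finset.mem_union.1 hm with h | h
    · have := (by decide : ∀ m ∈ FV (app T1 (var 0)), m < 2) m h
      omega
    · have := ih m h; simp only [bound3] at this; omega
  | u2 _ ih =>
    intro m hm
    simp only [bound3]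
    rcases Finset.mem_union.1 hm with h | h
    · have := (by decide : ∀ m ∈ FV T2, m < 2) m h
      omega
    · have := ih m h; simp only [bound3] at this; omega
  | u3 _ _ ih ih' =>
    intro m hm
    simp only [FV, Finset.mem_union, Finset.mem_singleton] at hm
    rcases hm with (rfl | hm) | (rfl | hm)
    · simp only [bound3]; omega
    · have := ih m hm; simp only [bound3] at this ⊢; omega
    · simp only [bound3]; omega
    · have := ih' m hm; simp only [bound3] at this ⊢; omega
  | w1 _ ih =>
    intro m hm
    simp only [bound3]
    rcases Finset.mem_union.1 hm with h | h
    · exact absurd h (by rw [show FV omega = ∅ from by decide]; exact Finset.notMem_empty m)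
    · have := ih m h; simp only [bound3] at this; omega
  | w2 _ ih =>
    intro m hm
    have := ih m hm; simp only [bound3] at this ⊢; omega

theorem C3q_closed_fv {a : Lam} (h : C3 .q a) : ∀ m ∈ FV a, False :=
  fun m hm => absurd (C3_fv h m hm) (by simp [bound3])

/-- generic head-step of a pair, for each of the four stages -/
theorem substQbody {b : Lam} (hb : ∀ m ∈ FV b, False) :
    (subst (abs (abs (abs (app (app (var 2) (var 1))
        (app (app (app combS (var 1)) (var 0)) (app (var 3) (var 3))))))) 0 b
      = abs (abs (abs (app (app (var 2) (var 1))
        (app (app (app combS (var 1)) (var 0)) (app b b)))))) ∧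
    (subst (abs (abs (abs (app (app (var 2) (var 1))
        (app (app T1 (var 0)) (app (var 3) (var 3))))))) 0 b
      = abs (abs (abs (app (app (var 2) (var 1))
        (app (app T1 (var 0)) (app b b)))))) ∧
    (subst (abs (abs (abs (app (app (var 2) (var 1))
        (app T2 (app (var 3) (var 3))))))) 0 b
      = abs (abs (abs (app (app (var 2) (var 1))
        (app T2 (app b b)))))) ∧
    (subst (abs (abs (abs (app (app (var 2) (var 1))
        (app (app (var 1) (app (var 3) (var 3))) (app (var 0) (app (var 3) (var 3)))))))) 0 b
      = abs (abs (abs (app (app (var 2) (var 1))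
        (app (app (var 1) (app b b)) (app (var 0) (app b b))))))) := by
  have hl : lift 0 b = b := lift_fv b 0 (fun m hm => absurd hm (hb m))
  refine ⟨?_, ?_, ?_, ?_⟩ <;>
    simp [subst, lift, hl, combS, T1, T2]

theorem C3_closed {i : Tag3} {s : Lam} (h : C3 i s) : ∀ {t : Lam}, Beta s t → C3 i t := by
  induction h with
  | q0 =>
    intro t hb
    have := beta_mem hb
    rw [show reducts QQ0 = [QQ1] from by decide] at this
    rw [List.mem_singleton.1 this]
    exact C3.q1
  | q1 =>
    intro t hb
    have := beta_mem hb
    rw [show reducts QQ1 = [QQ2] from by decide] at this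
    rw [List.mem_singleton.1 this]
    exact C3.q2
  | q2 =>
    intro t hb
    have := beta_mem hb
    rw [show reducts QQ2 = [QQ3] from by decide] at this
    rw [List.mem_singleton.1 this]
    exact C3.q3
  | q3 =>
    intro t hb
    have := beta_mem hb
    rw [show reducts QQ3 = [] from by decide] at this
    exact absurd this (List.not_mem_nil)
  | pair ha hb iha ihb =>
    intro t hstep
    cases hstep with
    | beta b u =>
      rcases substQbody (C3q_closed_fv hb) with ⟨e0, e1, e2, e3⟩
      cases ha with
      | q0 => rw [e0]; exact C3.node (C3.u0 (C3.pair hb hb))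
      | q1 => rw [e1]; exact C3.node (C3.u1 (C3.pair hb hb))
      | q2 => rw [e2]; exact C3.node (C3.u2 (C3.pair hb hb))
      | q3 => rw [e3]; exact C3.node (C3.u3 (C3.pair hb hb) (C3.pair hb hb))
    | appL _ h' => exact C3.pair (iha h') hb
    | appR _ h' => exact C3.pair ha (ihb h')
  | node hu ihu =>
    intro t hstep
    cases hstep with
    | abs h1 =>
      cases h1 with
      | abs h2 =>
        cases h2 with
        | abs h3 =>
          cases h3 with
          | appL _ h4 =>
            cases h4 with
            | appL _ h5 => exact absurd h5 var_nf
            | appR _ h5 => exact absurd h5 var_nf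
          | appR _ h4 => exact C3.node (ihu h4)
  | u0 hg ih =>
    intro t hstep
    cases hstep with
    | appL _ h' =>
      cases h' with
      | appL _ h'' =>
        cases h'' with
        | beta b u =>
          have e : subst (abs (abs (app (app (var 2) (var 0)) (app (var 1) (var 0))))) 0 (var 1)
              = T1 := by decide
          rw [e]
          exact C3.u1 hg
        | appL _ h3 => exact absurd h3 combS_nf
        | appR _ h3 => exact absurd h3 var_nf
      | appR _ h'' => exact absurd h'' var_nf
    | appR _ h' => exact C3.u0 (ih h')
  | u1 hg ih =>
    intro t hstep
    cases hstep with
    | appL _ h' =>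
      cases h' with
      | beta b u =>
        have e : subst (abs (app (app (var 3) (var 0)) (app (var 1) (var 0)))) 0 (var 0)
            = T2 := by decide
        rw [e]
        exact C3.u2 hg
      | appL _ h'' => exact absurd h'' T1_nf
      | appR _ h'' => exact absurd h'' var_nf
    | appR _ h' => exact C3.u1 (ih h')
  | u2 hg ih =>
    intro t hstep
    cases hstep with
    | beta b u =>
      have e : ∀ g : Lam, subst (app (app (var 2) (var 0)) (app (var 1) (var 0))) 0 g
          = app (app (var 1) g) (app (var 0) g) := by
        intro g; simp [subst]
      rw [e]
      exact C3.u3 hg hg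
    | appL _ h' => exact absurd h' (no_step (by decide))
    | appR _ h' => exact C3.u2 (ih h')
  | u3 hg hg' ih ih' =>
    intro t hstep
    cases hstep with
    | appL _ h' =>
      cases h' with
      | appL _ h'' => exact absurd h'' var_nf
      | appR _ h'' => exact C3.u3 (ih h'') hg'
    | appR _ h' =>
      cases h' with
      | appL _ h'' => exact absurd h'' var_nf
      | appR _ h'' => exact C3.u3 hg (ih' h'')
  | w1 hq ih =>
    intro t hstep
    cases hstep with
    | beta b u =>
      have e : ∀ g : Lam, subst (app (var 0) (var 0)) 0 g = app g g := by
        intro g; simp [subst]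
      rw [e]
      exact C3.w2 (C3.pair hq hq)
    | appL _ h' => exact absurd h' omega_nf
    | appR _ h' => exact C3.w1 (ih h')
  | w2 _ ih =>
    intro t hstep
    exact C3.w2 (ih hstep)
/-! ### Disjointness of the two reduct grammars -/

def size : Lam → ℕ
  | var _ => 1
  | app s t => size s + size t + 1
  | abs t => size t + 1

theorem disj : ∀ n k, size k ≤ n → C1 .h k → C3 .g3 k → False := by
  intro n
  induction n with
  | zero =>
    intro k hs h1 _
    cases h1
    simp [size] at hs
  | succ n ih =>
    intro k hs h1 h3
    cases h1 with
    | @node x y hx hy =>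
      cases h3 with
      | node hu =>
        cases hu with
        | u0 hg => cases hx
        | u1 hg => cases hx
        | u2 hg => cases hx
        | u3 hg hg' =>
          cases hx with
          | x1a hgg => cases hgg
          | x1b hk =>
            refine ih _ ?_ hk hg
            simp only [size] at hs
            omega

/-! ### Reduct invariants of `E1` and `E3` -/

def R1 (t : Lam) : Prop := t = E1 ∨ C1 .g1 t

def R3 (t : Lam) : Prop := t = E3 ∨ ∃ w, t = abs (app (var 0) w) ∧ C3 .w w

theorem R1_step {s t : Lam} (h : R1 s) (hb : Beta s t) : R1 t := by
  rcases h with rfl | hg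
  · rw [E1_eq] at hb
    cases hb with
    | beta b u =>
      have e : subst (app (var 0) (var 0)) 0 P = app P P := by decide
      rw [e]
      exact Or.inr C1.pp
    | appL _ h' => exact absurd h' omega_nf
    | appR _ h' => exact absurd h' P_nf
  · exact Or.inr (C1_closed hg hb)

theorem R3_step {s t : Lam} (h : R3 s) (hb : Beta s t) : R3 t := by
  rcases h with rfl | ⟨w, rfl, hw⟩
  · rw [E3_eq] at hb
    cases hb with
    | abs h1 =>
      cases h1 with
      | appL _ h2 => exact absurd h2 var_nf
      | appR _ h2 =>
        exact Or.inr ⟨_, rfl, C3_closed (C3.w1 C3.q0) h2⟩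
  · cases hb with
    | abs h1 =>
      cases h1 with
      | appL _ h2 => exact absurd h2 var_nf
      | appR _ h2 => exact Or.inr ⟨_, rfl, C3_closed hw h2⟩

theorem R1_star {s t : Lam} (h : R1 s) (hb : BetaStar s t) : R1 t := by
  induction hb with
  | refl => exact h
  | tail _ h2 ih => exact R1_step ih h2

theorem R3_star {s t : Lam} (h : R3 s) (hb : BetaStar s t) : R3 t := by
  induction hb with
  | refl => exact h
  | tail _ h2 ih => exact R3_step ih h2

theorem R1_R3_disjoint {t : Lam} (h1 : R1 t) (h3 : R3 t) : False := by
  have h3' : ∃ w, t = abs (app (var 0) w) ∧ C3 .w w := by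
    rcases h3 with rfl | h3'
    · exact ⟨app omega QQ0, E3_eq, C3.w1 C3.q0⟩
    · exact h3'
  rcases h3' with ⟨w, rfl, hw⟩
  rcases h1 with h1 | h1
  · rw [E1_eq] at h1
    exact absurd h1 (by simp)
  · cases h1 with
    | wrap hk =>
      cases hw with
      | w1 hq => cases hk
      | w2 hg => exact disj (size w) w le_rfl hk hg
/-- the evaluators `E₁` and `E₃` are inconvertible. -/
theorem E1_ne_E3 : ¬ Conv E1 E3 := by
  intro h
  rcases conv_join h with ⟨u, h1, h3⟩
  exact R1_R3_disjoint (R1_star (Or.inl rfl) h1) (R3_star (Or.inl rfl) h3)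

end Lam
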